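/- Let (g,⟨·,·⟩) be a metric Lie algebra and i ⊆ g an isotropic ideal (i.e. ⟨·,·⟩ vanishes on i×i, equivalently i ⊆ i^⊥) such that the quotient Lie algebra i^⊥/i is abelian. Then i^⊥ is 2-step nilpotent: [i^⊥,[i^⊥,i^⊥]] = 0. -/

import Mathlib

/-- In a metric Lie algebra, if `i` is an isotropic ideal such that `i^⊥/i` is abelian
(i.e. `[i^⊥, i^⊥] ⊆ i`), then `i^⊥` is 2-step nilpotent: `[i^⊥, [i^⊥, i^⊥]] = 0`. -/
theorem orthogonal_two_step_nilpotent
    (g : Type*) [LieRing g] [LieAlgebra ℝ g] [FiniteDimensional ℝ g]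
    (B : LinearMap.BilinForm ℝ g)
    (hsymm : ∀ x y : g, B x y = B y x)
    (hnd : B.Nondegenerate)
    (hinv : ∀ x y z : g, B ⁅x, y⁆ z = B x ⁅y, z⁆)
    (I : LieIdeal ℝ g)
    (hiso : ∀ x ∈ I, ∀ y ∈ I, B x y = 0)
    (hab : ∀ x ∈ B.orthogonal (I : Submodule ℝ g), ∀ y ∈ B.orthogonal (I : Submodule ℝ g),
      ⁅x, y⁆ ∈ I) :
    ∀ x ∈ B.orthogonal (I : Submodule ℝ g), ∀ y ∈ B.orthogonal (I : Submodule ℝ g),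
      ∀ z ∈ B.orthogonal (I : Submodule ℝ g), ⁅x, ⁅y, z⁆⁆ = 0 := by
  intro x hx y hy z hz
  have hyz : ⁅y, z⁆ ∈ I := hab y hy z hz
  apply hnd.1
  intro w
  rw [hinv]
  have hmem : ⁅(⁅y, z⁆ : g), w⁆ ∈ I := by
    have : (⁅w, ⁅y, z⁆⁆ : g) ∈ I := I.lie_mem hyz
    rw [← lie_skew]
    exact I.neg_mem this
  rw [hsymm]
  exact hx _ hmem
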